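/- Let S be an inverse semigroup, (τ, T) an inverse congruence pair, and ρ = { (x,y) : x⁻¹y ∈ T, x⁻¹yy⁻¹x τ x⁻¹x, y⁻¹xx⁻¹y τ y⁻¹y }. Then the trace of ρ equals τ (i.e. for idempotents e, f: e ρ f iff e τ f) and the inverse kernel of ρ equals T (i.e. a ρ aa⁻¹ iff a ∈ T). -/
import Mathlib

class InverseSemigroup (S : Type*) extends Semigroup S where
  inv : S → S
  mul_inv_mul : ∀ a : S, a * inv a * a = a
  inv_mul_inv : ∀ a : S, inv a * a * inv a = inv a
  inv_unique : ∀ a b : S, a * b * a = a → b * a * b = b → b = inv a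

open InverseSemigroup

/-- `e` is an idempotent. -/
def IsIdem {S : Type*} [Mul S] (e : S) : Prop := e * e = e

/-- `r` is a left congruence: an equivalence relation compatible with left multiplication. -/
def IsLeftCongruence {S : Type*} [Semigroup S] (r : S → S → Prop) : Prop :=
  Equivalence r ∧ ∀ a b c : S, r a b → r (c * a) (c * b)

/-- The inverse kernel of a relation: elements related to `a * a⁻¹`. -/
def InK {S : Type*} [InverseSemigroup S] (r : S → S → Prop) : Set S :=
  {a | r a (a * inv a)}

/-- The kernel: elements related to some idempotent. -/
def lker {S : Type*} [InverseSemigroup S] (r : S → S → Prop) : Set S :=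
  {a | ∃ e, IsIdem e ∧ r a e}

/-- `τ` is a congruence on the semilattice of idempotents `E(S)`. -/
def IsECong {S : Type*} [InverseSemigroup S] (τ : S → S → Prop) : Prop :=
  (∀ e f, τ e f → IsIdem e ∧ IsIdem f) ∧
  (∀ e, IsIdem e → τ e e) ∧
  (∀ e f, τ e f → τ f e) ∧
  (∀ e f g, τ e f → τ f g → τ e g) ∧
  (∀ e f g, IsIdem g → τ e f → τ (g * e) (g * f))

/-- The normaliser of a congruence on the idempotents. -/
def normaliser {S : Type*} [InverseSemigroup S] (τ : S → S → Prop) : Set S :=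
  {a | ∀ e f, τ e f → τ (a * e * inv a) (a * f * inv a) ∧ τ (inv a * e * a) (inv a * f * a)}

/-- `T` is a full inverse subsemigroup of `S`. -/
def IsFullInverseSub {S : Type*} [InverseSemigroup S] (T : Set S) : Prop :=
  (∀ e : S, IsIdem e → e ∈ T) ∧ (∀ a b, a ∈ T → b ∈ T → a * b ∈ T) ∧
  (∀ a, a ∈ T → inv a ∈ T)

section helpers
variable {S : Type*} [InverseSemigroup S]

lemma my_inv_inv (a : S) : inv (inv a) = a :=
  (InverseSemigroup.inv_unique (inv a) a (inv_mul_inv a) (mul_inv_mul a)).symm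

lemma idem_inv {e : S} (h : IsIdem e) : inv e = e :=
  (InverseSemigroup.inv_unique e e (by rw [h, h]) (by rw [h, h])).symm

lemma mul_inv_idem (a : S) : IsIdem (a * inv a) := by
  show (a * inv a) * (a * inv a) = a * inv a
  rw [← mul_assoc, mul_inv_mul]

lemma inv_mul_idem (a : S) : IsIdem (inv a * a) := by
  show (inv a * a) * (inv a * a) = inv a * a
  rw [← mul_assoc, inv_mul_inv]

lemma idem_mul_idem {e f : S} (he : IsIdem e) (hf : IsIdem f) : IsIdem (e * f) := by
  set b := inv (e * f) with hb
  have h1 : (e * f) * b * (e * f) = e * f := mul_inv_mul (e * f)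
  have h2 : b * (e * f) * b = b := inv_mul_inv (e * f)
  have key : f * b * e = b := by
    apply InverseSemigroup.inv_unique
    · calc (e * f) * (f * b * e) * (e * f)
          = e * (f * f) * b * (e * e) * f := by simp only [mul_assoc]
        _ = (e * f) * b * (e * f) := by rw [he, hf]; simp only [mul_assoc]
        _ = e * f := h1
    · calc (f * b * e) * (e * f) * (f * b * e)
          = f * b * ((e * e) * (f * f)) * b * e := by simp only [mul_assoc]
        _ = f * (b * (e * f) * b) * e := by rw [he, hf]; simp only [mul_assoc]
        _ = f * b * e := by rw [h2]
  have hbidem : IsIdem b := by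
    show b * b = b
    calc b * b = (f * b * e) * (f * b * e) := by rw [key]
      _ = f * (b * (e * f) * b) * e := by simp only [mul_assoc]
      _ = f * b * e := by rw [h2]
      _ = b := key
  have hef : e * f = b := by
    rw [← idem_inv hbidem]
    exact InverseSemigroup.inv_unique b (e * f) h2 h1
  exact hef ▸ hbidem

lemma idem_comm {e f : S} (he : IsIdem e) (hf : IsIdem f) : e * f = f * e := by
  have hef := idem_mul_idem he hf
  have hfe := idem_mul_idem hf he
  have : f * e = inv (e * f) := by
    apply InverseSemigroup.inv_unique
    · calc (e * f) * (f * e) * (e * f)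
          = e * (f * f) * (e * e) * f := by simp only [mul_assoc]
        _ = (e * f) * (e * f) := by rw [he, hf]; simp only [mul_assoc]
        _ = e * f := hef
    · calc (f * e) * (e * f) * (f * e)
          = f * (e * e) * (f * f) * e := by simp only [mul_assoc]
        _ = (f * e) * (f * e) := by rw [he, hf]; simp only [mul_assoc]
        _ = f * e := hfe
  rw [this, idem_inv hef]

end helpers

theorem stmt6 {S : Type*} [InverseSemigroup S] (τ : S → S → Prop) (T : Set S)
    (hτ : IsECong τ) (hT : IsFullInverseSub T) (hTN : T ⊆ normaliser τ)
    (hD2 : ∀ x e f : S, IsIdem e → IsIdem f → τ (inv x * x) e → τ (x * inv x) f →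
      x * e ∈ T → f * x ∈ T → x ∈ T) :
    (∀ e f : S, IsIdem e → IsIdem f →
      ((inv e * f ∈ T ∧ τ (inv e * f * inv f * e) (inv e * e) ∧
        τ (inv f * e * inv e * f) (inv f * f)) ↔ τ e f)) ∧
    (∀ a : S,
      (inv a * (a * inv a) ∈ T ∧
        τ (inv a * (a * inv a) * inv (a * inv a) * a) (inv a * a) ∧
        τ (inv (a * inv a) * a * inv a * (a * inv a)) (inv (a * inv a) * (a * inv a))) ↔
      a ∈ T) := by
  obtain ⟨hcl, hrefl, hsymm, htrans, hcomp⟩ := hτ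
  obtain ⟨hfull, hmul, hinv⟩ := hT
  constructor
  · intro e f he hf
    have hie : inv e = e := idem_inv he
    have hif : inv f = f := idem_inv hf
    have hee : e * e = e := he
    have hff : f * f = f := hf
    have hefe : e * f * f * e = e * f := by
      rw [mul_assoc e f f, hff, mul_assoc, idem_comm hf he, ← mul_assoc, hee]
    have hfef : f * e * e * f = f * e := by
      rw [mul_assoc f e e, hee, mul_assoc, idem_comm he hf, ← mul_assoc, hff]
    constructor
    · rintro ⟨-, h2, h3⟩
      rw [hie, hif, hefe, hee] at h2
      rw [hie, hif, hfef, hff] at h3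
      rw [idem_comm hf he] at h3
      exact htrans _ _ _ (hsymm _ _ h2) h3
    · intro h
      refine ⟨?_, ?_, ?_⟩
      · rw [hie]; exact hfull _ (idem_mul_idem he hf)
      · rw [hie, hif, hefe, hee]
        have h2 := hcomp e f e he h
        rw [hee] at h2
        exact hsymm _ _ h2
      · rw [hie, hif, hfef, hff]
        have h3 := hcomp e f f hf h
        rw [hff] at h3
        exact h3
  · intro a
    have ha1 : inv a * (a * inv a) = inv a := by rw [← mul_assoc, inv_mul_inv]
    have ha2 : inv (a * inv a) = a * inv a := idem_inv (mul_inv_idem a)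
    have haa : a * inv a * (a * inv a) = a * inv a := mul_inv_idem a
    constructor
    · rintro ⟨h1, -, -⟩
      rw [ha1] at h1
      have := hinv _ h1
      rwa [my_inv_inv] at this
    · intro haT
      refine ⟨?_, ?_, ?_⟩
      · rw [ha1]; exact hinv _ haT
      · have h2 : inv a * (a * inv a) * inv (a * inv a) * a = inv a * a := by
          rw [ha1, ha2, ha1]
        rw [h2]; exact hrefl _ (inv_mul_idem a)
      · have h3 : inv (a * inv a) * a * inv a * (a * inv a) = a * inv a := by
          rw [ha2, mul_inv_mul, haa]
        rw [h3, ha2, haa]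
        exact hrefl _ (mul_inv_idem a)
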